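/- arXiv:0712.0160 — 4 statements merged into one kernel-verified Lean document; each statement's English description precedes it below -/
import Mathlib

section
/- Let A be a finite-dimensional commutative Frobenius algebra over ℂ with trace form θ : A → ℂ and Euler element α ∈ A characterized by θ(α·x) = Tr_A(L_x) for all x ∈ A, where L_x is the operator of multiplication by x. If α is invertible in A, then A is semisimple. -/
/-- If the Euler element α of a finite-dimensional commutative Frobenius algebra A over ℂ
(characterized by θ(α·x) = Tr_A(L_x)) is invertible, then A is semisimple, i.e. isomorphic
as a ℂ-algebra to a finite product of copies of ℂ. -/
theorem stmt_0
    (A : Type) [CommRing A] [Algebra ℂ A] [FiniteDimensional ℂ A]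
    (θ : A →ₗ[ℂ] ℂ)
    (hnd : ∀ a : A, (∀ b : A, θ (a * b) = 0) → a = 0)
    (α : A)
    (hα : ∀ x : A, θ (α * x) = LinearMap.trace ℂ A (LinearMap.mulLeft ℂ x))
    (hαunit : IsUnit α) :
    ∃ N : ℕ, Nonempty (A ≃ₐ[ℂ] (Fin N → ℂ)) := by
  -- A is reduced
  have hred : IsReduced A := by
    constructor
    intro x hx
    have hax : α * x = 0 := by
      apply hnd
      intro b
      rw [mul_assoc, hα]
      have hnil : IsNilpotent (LinearMap.mulLeft ℂ (x * b)) := by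
        obtain ⟨n, hn⟩ := hx
        refine ⟨n, ?_⟩
        rw [LinearMap.pow_mulLeft, mul_pow, hn, zero_mul, LinearMap.mulLeft_zero_eq_zero]
      have := LinearMap.isNilpotent_trace_of_isNilpotent hnil
      exact this.eq_zero
    exact (hαunit.mul_right_eq_zero).mp hax
  have hart : IsArtinianRing A := isArtinian_of_tower ℂ inferInstance
  have hfin : Finite {I : Ideal A | I.IsMaximal} := (IsArtinianRing.setOfPred_isMaximal_finite A).to_subtype
  have := Fintype.ofFinite {I : Ideal A | I.IsMaximal}
  -- equivPi components
  let emax : MaximalSpectrum A ≃ {I : Ideal A | I.IsMaximal} :=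
    { toFun := fun p => ⟨p.asIdeal, p.isMaximal⟩, invFun := fun I => ⟨I.1, I.2⟩,
      left_inv := fun _ => rfl, right_inv := fun _ => rfl }
  let f0 : A ≃+* (∀ I : {I : Ideal A | I.IsMaximal}, A ⧸ I.1) :=
    (IsArtinianRing.equivPi A).toRingEquiv.trans
      (RingEquiv.piCongrLeft' (fun I : MaximalSpectrum A => A ⧸ I.asIdeal) emax)
  have hcomp : ∀ (a : A) (I : {I : Ideal A | I.IsMaximal}),
      f0 a I = Ideal.Quotient.mk I.1 a := by
    intro a I
    rfl
  -- upgrade to AlgEquiv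
  let e1 : A ≃ₐ[ℂ] (∀ I : {I : Ideal A | I.IsMaximal}, A ⧸ I.1) := by
    refine AlgEquiv.ofRingEquiv (f := f0) ?_
    intro c
    funext I
    rw [hcomp]
    rfl
  -- each quotient is ≃ₐ ℂ
  have hquot : ∀ I : {I : Ideal A | I.IsMaximal}, Nonempty ((A ⧸ I.1) ≃ₐ[ℂ] ℂ) := by
    intro I
    have hmax : I.1.IsMaximal := I.2
    letI : Field (A ⧸ I.1) := Ideal.Quotient.field I.1
    have : FiniteDimensional ℂ (A ⧸ I.1) := inferInstance
    have hbij : Function.Bijective (algebraMap ℂ (A ⧸ I.1)) := by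
      constructor
      · exact (algebraMap ℂ (A ⧸ I.1)).injective
      · exact IsAlgClosed.algebraMap_bijective_of_isIntegral.2
    exact ⟨(AlgEquiv.ofBijective (Algebra.ofId ℂ (A ⧸ I.1)) hbij).symm⟩
  let eq2 := fun I => (hquot I).some
  let e2 := AlgEquiv.piCongrRight eq2
  -- reindex to Fin N
  let n := Fintype.card {I : Ideal A | I.IsMaximal}
  let eidx : {I : Ideal A | I.IsMaximal} ≃ Fin n := Fintype.equivFin _
  let e3 : (∀ _ : {I : Ideal A | I.IsMaximal}, ℂ) ≃ₐ[ℂ] (Fin n → ℂ) := by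
    refine AlgEquiv.ofRingEquiv (f := RingEquiv.piCongrLeft (fun _ => ℂ) eidx) ?_
    intro c
    funext i
    simp [RingEquiv.piCongrLeft, RingEquiv.piCongrLeft', Equiv.piCongrLeft, Equiv.piCongrLeft']
  exact ⟨n, ⟨(e1.trans e2).trans e3⟩⟩
end

section
/- Let A be a finite-dimensional ℂ-vector space with nondegenerate symmetric bilinear form β, and let E(z) = Id + E₁z + E₂z² + ⋯ ∈ End(A)[[z]]. Let E*(z) denote the series of β-adjoints of the coefficients. Then the following are equivalent: (1) E*(z) ∘ E(−z) = Id in End(A)[[z]]; (2) the pointwise multiplication operator a(z) ↦ E(z)a(z) on A((z)) preserves the symplectic form Ω(a,b) = Res_{z=0} β(a(−z),b(z)) dz. -/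
private lemma sum_pair_supp {f : ℤ → ℂ} {s t : Finset ℤ}
    (hs : ∀ m, f m ≠ 0 → m ∈ s) (ht : ∀ m, f m ≠ 0 → m ∈ t) :
    ∑ m ∈ s, f m = ∑ m ∈ t, f m := by
  have h1 : ∑ m ∈ s, f m = ∑ m ∈ s ∪ t, f m :=
    Finset.sum_subset Finset.subset_union_left
      (fun x _ hx => by by_contra h; exact hx (hs x h))
  have h2 : ∑ m ∈ t, f m = ∑ m ∈ s ∪ t, f m :=
    Finset.sum_subset Finset.subset_union_right
      (fun x _ hx => by by_contra h; exact hx (ht x h))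
  rw [h1, h2]

private lemma square_triangle {M : Type*} [AddCommMonoid M] (N : ℕ) (c : ℕ → ℕ → M)
    (hvan : ∀ q r : ℕ, N ≤ q + r → c q r = 0) :
    ∑ q ∈ Finset.range N, ∑ r ∈ Finset.range N, c q r
      = ∑ k ∈ Finset.range N, ∑ q ∈ Finset.range (k + 1), c q (k - q) := by
  rw [← Finset.sum_product',
    Finset.sum_sigma' (Finset.range N) (fun k => Finset.range (k + 1)) (fun k q => c q (k - q)),
    ← Finset.sum_subset
      (Finset.filter_subset (fun x : ℕ × ℕ => x.1 + x.2 < N) (Finset.range N ×ˢ Finset.range N))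
      (fun x hx hxn => hvan x.1 x.2 (by
        simp only [Finset.mem_filter, not_and, not_lt] at hxn
        exact hxn hx))]
  refine Finset.sum_nbij' (fun x : ℕ × ℕ => (⟨x.1 + x.2, x.1⟩ : (_ : ℕ) × ℕ))
    (fun y : (_ : ℕ) × ℕ => (y.2, y.1 - y.2)) ?_ ?_ ?_ ?_ ?_
  · rintro ⟨q, r⟩ hx
    simp only [Finset.mem_filter, Finset.mem_product, Finset.mem_range] at hx
    dsimp only
    simp only [Finset.mem_sigma, Finset.mem_range]
    omega
  · rintro ⟨k, q⟩ hy
    simp only [Finset.mem_sigma, Finset.mem_range] at hy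
    dsimp only
    simp only [Finset.mem_filter, Finset.mem_product, Finset.mem_range]
    omega
  · rintro ⟨q, r⟩ hx
    simp only [Finset.mem_filter, Finset.mem_product, Finset.mem_range] at hx
    dsimp only
    simp only [Prod.mk.injEq, true_and]
    omega
  · rintro ⟨k, q⟩ hy
    simp only [Finset.mem_sigma, Finset.mem_range] at hy
    dsimp only
    congr 1
    all_goals first | omega | rfl
  · rintro ⟨q, r⟩ hx
    simp only [Finset.mem_filter, Finset.mem_product, Finset.mem_range] at hx
    dsimp only
    congr 1
    omega

private lemma negpow (k q : ℕ) (h : q ≤ k) : (-1 : ℂ) ^ q = (-1) ^ k * (-1) ^ (k - q) := by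
  have h1 : (-1 : ℂ) ^ k = (-1) ^ (k - q) * (-1) ^ q := by
    rw [← pow_add, Nat.sub_add_cancel h]
  have he : (-1 : ℂ) ^ (k - q) * (-1 : ℂ) ^ (k - q) = 1 := by
    rw [← pow_add]
    exact Even.neg_one_pow ⟨k - q, rfl⟩
  rw [h1, mul_comm ((-1 : ℂ) ^ (k - q)), mul_assoc, he, mul_one]

/-- For E(z) = Id + E₁z + ⋯ ∈ End(A)[[z]] with β-adjoint series E*(z), the condition
E*(z)∘E(−z) = Id (coefficientwise: Σ_{p+q=k} (−1)^q E*_p ∘ E_q = δ_{k0} Id) holds iff the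
pointwise action of E on Laurent series A((z)) preserves Ω(a,b) = Res β(a(−z),b(z))dz. -/
theorem stmt_7
    (A : Type) [AddCommGroup A] [Module ℂ A] [FiniteDimensional ℂ A]
    (B : A →ₗ[ℂ] A →ₗ[ℂ] ℂ)
    (hsymm : ∀ x y, B x y = B y x)
    (hnd : ∀ x, (∀ y, B x y = 0) → x = 0)
    (E Estar : ℕ → Module.End ℂ A)
    (hE0 : E 0 = 1)
    (hadj : ∀ k x y, B (Estar k x) y = B x (E k y)) :
    (∀ k : ℕ, ∑ p ∈ Finset.range (k + 1),
        ((-1 : ℂ) ^ (k - p)) • (Estar p ∘ₗ E (k - p)) = if k = 0 then 1 else 0)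
    ↔
    (∀ a b : ℤ → A, (∃ Na : ℤ, ∀ n < Na, a n = 0) → (∃ Nb : ℤ, ∀ n < Nb, b n = 0) →
      (∑ᶠ p : ℤ, (-1 : ℂ) ^ p *
          B (∑ᶠ q : ℕ, E q (a (p - q))) (∑ᶠ q : ℕ, E q (b (-1 - p - q))))
        = ∑ᶠ p : ℤ, (-1 : ℂ) ^ p * B (a p) (b (-1 - p))) := by
  have hz : (-1 : ℂ) ≠ 0 := by norm_num
  have hBE : ∀ (q : ℕ) (x y : A), B (E q x) y = B x (Estar q y) := by
    intro q x y
    rw [hsymm, ← hadj, hsymm]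
  have hnd2 : ∀ z : A, (∀ x, B x z = 0) → z = 0 :=
    fun z h => hnd z fun y => (hsymm z y).trans (h y)
  constructor
  · rintro hC a b ⟨Na, hNa⟩ ⟨Nb, hNb⟩
    set M : ℤ := -1 - Nb with hM
    set N : ℕ := (M - Na + 1).toNat with hN
    set S : Finset ℤ := Finset.Icc Na M with hS
    have hNge : (M - Na + 1 : ℤ) ≤ (N : ℤ) := Int.self_le_toNat _
    have hinA : ∀ p : ℤ, p ≤ M →
        (∑ᶠ q : ℕ, E q (a (p - q))) = ∑ q ∈ Finset.range N, E q (a (p - q)) := by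
      intro p hp
      apply finsum_eq_finset_sum_of_support_subset
      intro q hq
      simp only [Function.mem_support] at hq
      simp only [Finset.coe_range, Set.mem_Iio]
      by_contra h
      push_neg at h
      have hqN : (N : ℤ) ≤ (q : ℤ) := by exact_mod_cast h
      exact hq (by rw [hNa (p - q) (by omega), map_zero])
    have hinB : ∀ p : ℤ, Na ≤ p →
        (∑ᶠ q : ℕ, E q (b (-1 - p - q))) = ∑ q ∈ Finset.range N, E q (b (-1 - p - q)) := by
      intro p hp
      apply finsum_eq_finset_sum_of_support_subset
      intro q hq
      simp only [Function.mem_support] at hq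
      simp only [Finset.coe_range, Set.mem_Iio]
      by_contra h
      push_neg at h
      have hqN : (N : ℤ) ≤ (q : ℤ) := by exact_mod_cast h
      exact hq (by rw [hNb (-1 - p - q) (by omega), map_zero])
    have hL : (∑ᶠ p : ℤ, (-1 : ℂ) ^ p *
          B (∑ᶠ q : ℕ, E q (a (p - q))) (∑ᶠ q : ℕ, E q (b (-1 - p - q))))
        = ∑ p ∈ S, (-1 : ℂ) ^ p *
            B (∑ q ∈ Finset.range N, E q (a (p - q)))
              (∑ q ∈ Finset.range N, E q (b (-1 - p - q))) := by
      rw [finsum_eq_finset_sum_of_support_subset _ (s := S) ?_]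
      · refine Finset.sum_congr rfl fun p hp => ?_
        rw [hS, Finset.mem_Icc] at hp
        rw [hinA p hp.2, hinB p hp.1]
      · intro p hp
        simp only [Function.mem_support] at hp
        rw [hS, Finset.coe_Icc, Set.mem_Icc]
        constructor
        · by_contra h
          push_neg at h
          refine hp ?_
          have h0 : (∑ᶠ q : ℕ, E q (a (p - q))) = 0 :=
            finsum_eq_zero_of_forall_eq_zero fun q => by
              have : (0:ℤ) ≤ (q:ℤ) := Int.natCast_nonneg q
              rw [hNa (p - q) (by omega), map_zero]
          rw [h0]
          simp
        · by_contra h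
          push_neg at h
          refine hp ?_
          have h0 : (∑ᶠ q : ℕ, E q (b (-1 - p - q))) = 0 :=
            finsum_eq_zero_of_forall_eq_zero fun q => by
              have : (0:ℤ) ≤ (q:ℤ) := Int.natCast_nonneg q
              rw [hNb (-1 - p - q) (by omega), map_zero]
          rw [h0]
          simp
    have hR : (∑ᶠ p : ℤ, (-1 : ℂ) ^ p * B (a p) (b (-1 - p)))
        = ∑ p ∈ S, (-1 : ℂ) ^ p * B (a p) (b (-1 - p)) := by
      apply finsum_eq_finset_sum_of_support_subset
      intro p hp
      simp only [Function.mem_support] at hp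
      rw [hS, Finset.coe_Icc, Set.mem_Icc]
      constructor
      · by_contra h
        push_neg at h
        exact hp (by rw [hNa p h]; simp)
      · by_contra h
        push_neg at h
        exact hp (by rw [hNb (-1 - p) (by omega)]; simp)
    rw [hL, hR]
    calc
      ∑ p ∈ S, (-1 : ℂ) ^ p *
          B (∑ q ∈ Finset.range N, E q (a (p - q)))
            (∑ q ∈ Finset.range N, E q (b (-1 - p - q)))
        = ∑ p ∈ S, ∑ q ∈ Finset.range N, ∑ r ∈ Finset.range N,
            (-1 : ℂ) ^ p * B (a (p - q)) (Estar q (E r (b (-1 - p - r)))) := by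
          refine Finset.sum_congr rfl fun p _ => ?_
          rw [map_sum B, LinearMap.sum_apply, Finset.mul_sum]
          refine Finset.sum_congr rfl fun q _ => ?_
          rw [map_sum (B (E q (a (p - q)))), Finset.mul_sum]
          refine Finset.sum_congr rfl fun r _ => ?_
          rw [hBE]
      _ = ∑ q ∈ Finset.range N, ∑ r ∈ Finset.range N, ∑ p ∈ S,
            (-1 : ℂ) ^ p * B (a (p - q)) (Estar q (E r (b (-1 - p - r)))) := by
          rw [Finset.sum_comm]
          exact Finset.sum_congr rfl fun q _ => Finset.sum_comm
      _ = ∑ q ∈ Finset.range N, ∑ r ∈ Finset.range N, ∑ m ∈ S,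
            (-1 : ℂ) ^ (m + q) * B (a m) (Estar q (E r (b (-1 - m - q - r)))) := by
          refine Finset.sum_congr rfl fun q _ => Finset.sum_congr rfl fun r _ => ?_
          have step1 : ∑ p ∈ S,
                (-1 : ℂ) ^ p * B (a (p - q)) (Estar q (E r (b (-1 - p - r))))
              = ∑ m ∈ Finset.Icc (Na - q) (M - q),
                (-1 : ℂ) ^ (m + q) * B (a m) (Estar q (E r (b (-1 - m - q - r)))) := by
            refine Finset.sum_nbij' (fun p => p - (q : ℤ)) (fun m => m + (q : ℤ))
              ?_ ?_ ?_ ?_ ?_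
            · intro p hp
              rw [hS, Finset.mem_Icc] at hp
              simp only [Finset.mem_Icc]
              omega
            · intro m hm
              rw [Finset.mem_Icc] at hm
              simp only [hS, Finset.mem_Icc]
              omega
            · intro p _; ring
            · intro m _; ring
            · intro p _
              have h1 : p - (q : ℤ) + (q : ℤ) = p := by ring
              have h2 : -1 - (p - (q : ℤ)) - (q : ℤ) - (r : ℤ) = -1 - p - r := by ring
              rw [h1, h2]
          rw [step1]
          refine sum_pair_supp ?_ ?_ <;> intro m hm <;>
            [rw [Finset.mem_Icc]; rw [hS, Finset.mem_Icc]] <;>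
            constructor
          · by_contra h
            push_neg at h
            exact hm (by rw [hNa m (by omega)]; simp)
          · by_contra h
            push_neg at h
            have : (0:ℤ) ≤ (r:ℤ) := Int.natCast_nonneg r
            exact hm (by rw [hNb (-1 - m - q - r) (by omega)]; simp)
          · by_contra h
            push_neg at h
            have : (0:ℤ) ≤ (q:ℤ) := Int.natCast_nonneg q
            exact hm (by rw [hNa m (by omega)]; simp)
          · by_contra h
            push_neg at h
            have hr : (0:ℤ) ≤ (r:ℤ) := Int.natCast_nonneg r
            have hq : (0:ℤ) ≤ (q:ℤ) := Int.natCast_nonneg q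
            exact hm (by rw [hNb (-1 - m - q - r) (by omega)]; simp)
      _ = ∑ m ∈ S, ∑ q ∈ Finset.range N, ∑ r ∈ Finset.range N,
            (-1 : ℂ) ^ (m + q) * B (a m) (Estar q (E r (b (-1 - m - q - r)))) := by
          exact (Finset.sum_congr rfl fun q _ => Finset.sum_comm).trans Finset.sum_comm
      _ = ∑ m ∈ S, (-1 : ℂ) ^ m * B (a m) (b (-1 - m)) := by
          refine Finset.sum_congr rfl fun m hm => ?_
          rw [hS, Finset.mem_Icc] at hm
          have hvan : ∀ q r : ℕ, N ≤ q + r →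
              (-1 : ℂ) ^ (m + q) * B (a m) (Estar q (E r (b (-1 - m - q - r)))) = 0 := by
            intro q r h
            have hqr : (N : ℤ) ≤ (q : ℤ) + (r : ℤ) := by exact_mod_cast h
            rw [hNb (-1 - m - q - r) (by omega)]
            simp
          rw [square_triangle N _ hvan]
          have hterm : ∀ k ∈ Finset.range N,
              (∑ q ∈ Finset.range (k + 1), (-1 : ℂ) ^ (m + q) *
                B (a m) (Estar q (E (k - q) (b (-1 - m - q - ((k - q : ℕ) : ℤ))))))
              = if k = 0 then (-1 : ℂ) ^ m * B (a m) (b (-1 - m)) else 0 := by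
            intro k _
            have hstep : (∑ q ∈ Finset.range (k + 1), (-1 : ℂ) ^ (m + q) *
                  B (a m) (Estar q (E (k - q) (b (-1 - m - q - ((k - q : ℕ) : ℤ))))))
                = ((-1 : ℂ) ^ m * (-1 : ℂ) ^ k) *
                    B (a m) ((∑ p ∈ Finset.range (k + 1),
                      ((-1 : ℂ) ^ (k - p)) • (Estar p ∘ₗ E (k - p))) (b (-1 - m - k))) := by
              rw [LinearMap.sum_apply, map_sum, Finset.mul_sum]
              refine Finset.sum_congr rfl fun q hq => ?_
              rw [Finset.mem_range] at hq
              have hqk : q ≤ k := by omega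
              have hcast : (-1 - m - (q : ℤ) - ((k - q : ℕ) : ℤ)) = -1 - m - (k : ℤ) := by
                omega
              rw [hcast, LinearMap.smul_apply, LinearMap.comp_apply, map_smul, smul_eq_mul]
              rw [zpow_add₀ hz, zpow_natCast, negpow k q hqk]
              ring
            rw [hstep, hC k]
            by_cases h0 : k = 0
            · subst h0
              simp
            · rw [if_neg h0]
              simp [h0]
          rw [Finset.sum_congr rfl hterm, Finset.sum_ite_eq' (Finset.range N) 0
            (fun _ => (-1 : ℂ) ^ m * B (a m) (b (-1 - m)))]
          rw [if_pos (by rw [Finset.mem_range]; omega)]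
  · intro hΩ k
    have key : ∀ x y : A,
        (∑ j ∈ Finset.range (k + 1), (-1 : ℂ) ^ j * B (E j x) (E (k - j) y))
          = if k = 0 then B x y else 0 := by
      intro x y
      set a : ℤ → A := fun n => if n = 0 then x else 0 with ha
      set b : ℤ → A := fun n => if n = -1 - (k : ℤ) then y else 0 with hb
      have h := hΩ a b ⟨0, fun n hn => if_neg (by omega)⟩
        ⟨-1 - (k : ℤ), fun n hn => if_neg (by omega)⟩
      have hrhs : (∑ᶠ p : ℤ, (-1 : ℂ) ^ p * B (a p) (b (-1 - p)))
          = if k = 0 then B x y else 0 := by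
        rw [finsum_eq_single _ 0 (fun p hp => by
          simp only [ha]
          rw [if_neg hp]
          simp)]
        by_cases h0 : k = 0
        · subst h0
          simp [ha, hb]
        · rw [if_neg h0]
          simp only [ha, hb]
          rw [if_neg (show (-1 - 0 : ℤ) ≠ -1 - (k : ℤ) by omega)]
          simp
      have hinA : ∀ p : ℤ, (∑ᶠ q : ℕ, E q (a (p - q)))
          = if 0 ≤ p then E p.toNat x else 0 := by
        intro p
        by_cases hp : 0 ≤ p
        · rw [if_pos hp, finsum_eq_single _ p.toNat (fun q hq => by
            simp only [ha]
            rw [if_neg (by omega), map_zero])]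
          simp only [ha]
          rw [if_pos (by omega)]
        · rw [if_neg hp]
          exact finsum_eq_zero_of_forall_eq_zero fun q => by
            simp only [ha]
            have : (0:ℤ) ≤ (q:ℤ) := Int.natCast_nonneg q
            rw [if_neg (by omega), map_zero]
      have hinB : ∀ p : ℤ, (∑ᶠ q : ℕ, E q (b (-1 - p - q)))
          = if p ≤ (k : ℤ) then E (k - p).toNat y else 0 := by
        intro p
        by_cases hp : p ≤ (k : ℤ)
        · rw [if_pos hp, finsum_eq_single _ (k - p).toNat (fun q hq => by
            simp only [hb]
            rw [if_neg (by omega), map_zero])]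
          simp only [hb]
          rw [if_pos (by omega)]
        · rw [if_neg hp]
          exact finsum_eq_zero_of_forall_eq_zero fun q => by
            simp only [hb]
            have : (0:ℤ) ≤ (q:ℤ) := Int.natCast_nonneg q
            rw [if_neg (by omega), map_zero]
      have hlhs : (∑ᶠ p : ℤ, (-1 : ℂ) ^ p *
            B (∑ᶠ q : ℕ, E q (a (p - q))) (∑ᶠ q : ℕ, E q (b (-1 - p - q))))
          = ∑ j ∈ Finset.range (k + 1), (-1 : ℂ) ^ j * B (E j x) (E (k - j) y) := by
        rw [finsum_eq_finset_sum_of_support_subset _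
          (s := Finset.Icc (0 : ℤ) (k : ℤ)) ?_]
        · refine Finset.sum_nbij' (fun p => p.toNat) (fun j => (j : ℤ)) ?_ ?_ ?_ ?_ ?_
          · intro p hp
            simp only [Finset.mem_Icc] at hp
            simp only [Finset.mem_range]
            omega
          · intro j hj
            simp only [Finset.mem_range] at hj
            simp only [Finset.mem_Icc]
            omega
          · intro p hp
            simp only [Finset.mem_Icc] at hp
            omega
          · intro j _
            omega
          · intro p hp
            rw [Finset.mem_Icc] at hp
            rw [hinA p, if_pos hp.1, hinB p, if_pos hp.2]
            have h1 : (-1 : ℂ) ^ p = (-1 : ℂ) ^ p.toNat := by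
              rw [← zpow_natCast]
              congr 1
              omega
            have h2 : (k - p).toNat = k - p.toNat := by omega
            rw [h1, h2]
        · intro p hp
          simp only [Function.mem_support] at hp
          rw [Finset.coe_Icc, Set.mem_Icc]
          constructor
          · by_contra hc
            push_neg at hc
            exact hp (by rw [hinA p, if_neg (by omega)]; simp)
          · by_contra hc
            push_neg at hc
            exact hp (by rw [hinB p, if_neg (by omega)]; simp)
      rw [hlhs, hrhs] at h
      exact h
    have key2 : ∀ x y : A,
        (-1 : ℂ) ^ k * B x ((∑ p ∈ Finset.range (k + 1),
          ((-1 : ℂ) ^ (k - p)) • (Estar p ∘ₗ E (k - p))) y)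
          = if k = 0 then B x y else 0 := by
      intro x y
      rw [← key x y, LinearMap.sum_apply, map_sum, Finset.mul_sum]
      refine Finset.sum_congr rfl fun j hj => ?_
      rw [Finset.mem_range] at hj
      have hjk : j ≤ k := by omega
      rw [LinearMap.smul_apply, LinearMap.comp_apply, map_smul, smul_eq_mul, hBE,
        negpow k j hjk]
      ring
    apply LinearMap.ext
    intro y
    by_cases h0 : k = 0
    · subst h0
      rw [if_pos rfl, Module.End.one_apply]
      refine eq_of_sub_eq_zero (hnd2 _ fun x => ?_)
      have h := key2 x y
      simp only [pow_zero, one_mul] at h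
      rw [map_sub, h]
      simp
    · rw [if_neg h0, LinearMap.zero_apply]
      refine hnd2 _ fun x => ?_
      have h := key2 x y
      rw [if_neg h0] at h
      exact (mul_eq_zero.mp h).resolve_left (pow_ne_zero k hz)
end

section
/- Let A be a finite-dimensional ℂ-vector space with nondegenerate symmetric bilinear form β, and let E(z) ∈ Id + z·End(A)[[z]] satisfy the symplectic condition E*(z)∘E(−z) = Id. Define W_E(z₁,z₂) := (E(z₂)^{−1}E(−z₁)^* − Id)/(z₁+z₂) ∈ End(A)[[z₁,z₂]] (the numerator is divisible by z₁+z₂). Then W_E satisfies the symmetry W_E(z₁,z₂)* = W_E(z₂,z₁), where * is applied coefficient-wise. -/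
/-- For symplectic E(z) = Id + O(z) in End(A)[[z]], the series
W_E(z₁,z₂) = (E(z₂)^{−1}E(−z₁)* − Id)/(z₁+z₂) (characterized coefficientwise by
(z₁+z₂)·W being the numerator) satisfies the symmetry W_E(z₁,z₂)* = W_E(z₂,z₁). -/
theorem stmt_8
    (A : Type) [AddCommGroup A] [Module ℂ A] [FiniteDimensional ℂ A]
    (B : A →ₗ[ℂ] A →ₗ[ℂ] ℂ)
    (hsymm : ∀ x y, B x y = B y x)
    (hnd : ∀ x, (∀ y, B x y = 0) → x = 0)
    (E Estar Einv : ℕ → Module.End ℂ A)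
    (hE0 : E 0 = 1)
    (hadj : ∀ k x y, B (Estar k x) y = B x (E k y))
    (hsymp : ∀ k : ℕ, ∑ p ∈ Finset.range (k + 1),
        ((-1 : ℂ) ^ (k - p)) • (Estar p ∘ₗ E (k - p)) = if k = 0 then 1 else 0)
    (hinv : ∀ k : ℕ, ∑ p ∈ Finset.range (k + 1), (E p ∘ₗ Einv (k - p))
        = if k = 0 then 1 else 0)
    (hinv' : ∀ k : ℕ, ∑ p ∈ Finset.range (k + 1), (Einv p ∘ₗ E (k - p))
        = if k = 0 then 1 else 0)
    (W : ℕ → ℕ → Module.End ℂ A)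
    (hW : ∀ p q : ℕ,
        (if p = 0 then 0 else W (p - 1) q) + (if q = 0 then 0 else W p (q - 1))
          = ((-1 : ℂ) ^ p) • (Einv q ∘ₗ Estar p) - (if p = 0 ∧ q = 0 then 1 else 0)) :
    ∀ (p q : ℕ) (x y : A), B (W p q x) y = B x (W q p y) := by
  have hEinv0 : Einv 0 = 1 := by
    have h := hinv 0
    simpa [hE0, Module.End.one_eq_id] using h
  -- Lemma A : alternating anti-diagonal sums of hW telescope
  have lemA : ∀ k, ∑ p ∈ Finset.range (k + 1), (Einv (k - p) ∘ₗ Estar p)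
      = if k = 0 then 1 else 0 := by
    intro k
    have key : (∑ p ∈ Finset.range (k + 1), ((-1 : ℂ) ^ p) •
          ((if p = 0 then 0 else W (p - 1) (k - p)) +
            (if k - p = 0 then 0 else W p (k - p - 1))))
        = ∑ p ∈ Finset.range (k + 1), ((-1 : ℂ) ^ p) •
          (((-1 : ℂ) ^ p) • (Einv (k - p) ∘ₗ Estar p)
            - (if p = 0 ∧ k - p = 0 then 1 else 0)) := by
      refine Finset.sum_congr rfl fun p _ => ?_
      rw [hW p (k - p)]
    have lhs0 : (∑ p ∈ Finset.range (k + 1), ((-1 : ℂ) ^ p) •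
          ((if p = 0 then 0 else W (p - 1) (k - p)) +
            (if k - p = 0 then 0 else W p (k - p - 1)))) = 0 := by
      have split : (∑ p ∈ Finset.range (k + 1), ((-1 : ℂ) ^ p) •
            ((if p = 0 then 0 else W (p - 1) (k - p)) +
              (if k - p = 0 then 0 else W p (k - p - 1))))
          = (∑ p ∈ Finset.range (k + 1), ((-1 : ℂ) ^ p) •
              (if p = 0 then 0 else W (p - 1) (k - p)))
            + (∑ p ∈ Finset.range (k + 1), ((-1 : ℂ) ^ p) •
              (if k - p = 0 then 0 else W p (k - p - 1))) := by
        rw [← Finset.sum_add_distrib]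
        exact Finset.sum_congr rfl fun p _ => smul_add _ _ _
      rw [split,
        Finset.sum_range_succ' (fun p => ((-1 : ℂ) ^ p) •
          (if p = 0 then 0 else W (p - 1) (k - p))),
        Finset.sum_range_succ (fun p => ((-1 : ℂ) ^ p) •
          (if k - p = 0 then 0 else W p (k - p - 1)))]
      have e0 : ((-1 : ℂ) ^ (0 : ℕ)) •
          (if (0 : ℕ) = 0 then (0 : Module.End ℂ A) else W (0 - 1) (k - 0)) = 0 := by simp
      have ek : ((-1 : ℂ) ^ k) •
          (if k - k = 0 then (0 : Module.End ℂ A) else W k (k - k - 1)) = 0 := by simp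
      rw [e0, ek, add_zero, add_zero, ← Finset.sum_add_distrib]
      refine Finset.sum_eq_zero fun i hi => ?_
      have h1 : k - (i + 1) = k - i - 1 := by omega
      rw [if_neg (Nat.succ_ne_zero i), h1, pow_succ, mul_smul]
      simp [Nat.sub_ne_zero_of_lt (Finset.mem_range.mp hi)]
    rw [lhs0] at key
    have rhs : (∑ p ∈ Finset.range (k + 1), ((-1 : ℂ) ^ p) •
          (((-1 : ℂ) ^ p) • (Einv (k - p) ∘ₗ Estar p)
            - (if p = 0 ∧ k - p = 0 then 1 else 0)))
        = (∑ p ∈ Finset.range (k + 1), (Einv (k - p) ∘ₗ Estar p))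
          - (if k = 0 then 1 else 0) := by
      have e1 : ∀ p ∈ Finset.range (k + 1), ((-1 : ℂ) ^ p) •
            (((-1 : ℂ) ^ p) • (Einv (k - p) ∘ₗ Estar p)
              - (if p = 0 ∧ k - p = 0 then 1 else 0))
          = (Einv (k - p) ∘ₗ Estar p)
            - (if p = 0 ∧ k = 0 then 1 else 0) := by
        intro p _
        rw [smul_sub, smul_smul, ← pow_add]
        have : Even (p + p) := ⟨p, rfl⟩
        rw [this.neg_one_pow, one_smul]
        congr 1
        by_cases hp : p = 0
        · subst hp; simp
        · simp [hp]
      rw [Finset.sum_congr rfl e1, Finset.sum_sub_distrib]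
      congr 1
      by_cases hk : k = 0
      · subst hk; simp
      · rw [if_neg hk]
        refine Finset.sum_eq_zero fun p _ => ?_
        simp [hk]
    rw [rhs] at key
    exact sub_eq_zero.mp key.symm
    -- Lemma B : Estar = E
  have lemB : ∀ k, Estar k = E k := by
    intro k
    induction k using Nat.strong_induction_on with
    | _ k ih =>
      have hr := Finset.sum_range_reflect (fun p => Einv p ∘ₗ E (k - p)) (k + 1)
      have h2 : ∑ p ∈ Finset.range (k + 1), (Einv (k - p) ∘ₗ E p)
          = if k = 0 then 1 else 0 := by
        rw [← hinv' k, ← hr]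
        refine Finset.sum_congr rfl fun p hp => ?_
        have hp' : p ≤ k := Nat.lt_succ_iff.mp (Finset.mem_range.mp hp)
        have e1 : k + 1 - 1 - p = k - p := by omega
        have e2 : k - (k - p) = p := by omega
        rw [e1, e2]
      have h3 := (lemA k).trans h2.symm
      rw [Finset.sum_range_succ, Finset.sum_range_succ] at h3
      have h4 : ∑ p ∈ Finset.range k, (Einv (k - p) ∘ₗ Estar p)
          = ∑ p ∈ Finset.range k, (Einv (k - p) ∘ₗ E p) :=
        Finset.sum_congr rfl fun p hp => by rw [ih p (Finset.mem_range.mp hp)]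
      rw [h4] at h3
      have h5 := add_left_cancel h3
      rw [Nat.sub_self, hEinv0] at h5
      simpa [Module.End.one_eq_id] using h5
  -- Lemma C : Einv k = (-1)^k • E k
  have lemC : ∀ k, Einv k = ((-1 : ℂ) ^ k) • E k := by
    intro k
    induction k using Nat.strong_induction_on with
    | _ k ih =>
      have h1 := hinv' k
      rw [Finset.sum_range_succ, Nat.sub_self, hE0] at h1
      have h2 := hsymp k
      rw [Finset.sum_range_succ, Nat.sub_self, hE0, lemB k] at h2
      have e1 : ∑ p ∈ Finset.range k, (Einv p ∘ₗ E (k - p))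
          = ∑ p ∈ Finset.range k, ((-1 : ℂ) ^ p) • (E p ∘ₗ E (k - p)) := by
        refine Finset.sum_congr rfl fun p hp => ?_
        rw [ih p (Finset.mem_range.mp hp), LinearMap.smul_comp]
      have e2 : ∑ p ∈ Finset.range k, ((-1 : ℂ) ^ (k - p)) • (Estar p ∘ₗ E (k - p))
          = ((-1 : ℂ) ^ k) • ∑ p ∈ Finset.range k, ((-1 : ℂ) ^ p) • (E p ∘ₗ E (k - p)) := by
        rw [Finset.smul_sum]
        refine Finset.sum_congr rfl fun p hp => ?_
        rw [lemB p, smul_smul, ← pow_add]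
        have hp' : p ≤ k := le_of_lt (Finset.mem_range.mp hp)
        have hx : k + p = (k - p) + 2 * p := by omega
        rw [hx, pow_add, pow_mul]
        norm_num
      rw [e1] at h1
      rw [e2] at h2
      have hA : Einv k = (if k = 0 then 1 else 0)
          - ∑ p ∈ Finset.range k, ((-1 : ℂ) ^ p) • (E p ∘ₗ E (k - p)) := by
        have := eq_sub_of_add_eq' h1
        rwa [← Module.End.mul_eq_comp, mul_one] at this
      have hB : E k = (if k = 0 then 1 else 0)
          - ((-1 : ℂ) ^ k) • ∑ p ∈ Finset.range k, ((-1 : ℂ) ^ p) • (E p ∘ₗ E (k - p)) := by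
        have := eq_sub_of_add_eq' h2
        rwa [pow_zero, one_smul, ← Module.End.mul_eq_comp, mul_one] at this
      rw [hA, hB, smul_sub, smul_smul, ← pow_add]
      have heven : ((-1 : ℂ)) ^ (k + k) = 1 := (Even.neg_one_pow ⟨k, rfl⟩)
      rw [heven, one_smul]
      congr 1
      by_cases hk : k = 0
      · subst hk; simp
      · simp [hk]
  -- E is self-adjoint
  have hadjE : ∀ k x y, B (E k x) y = B x (E k y) := by
    intro k x y
    have := hadj k x y
    rwa [lemB k] at this
  -- adjoint symmetry of the numerator
  have hN : ∀ p q : ℕ, ∀ x y : A,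
      B ((((-1 : ℂ) ^ p) • (Einv q ∘ₗ Estar p) - (if p = 0 ∧ q = 0 then 1 else 0)) x) y
      = B x ((((-1 : ℂ) ^ q) • (Einv p ∘ₗ Estar q) - (if q = 0 ∧ p = 0 then 1 else 0)) y) := by
    intro p q x y
    simp only [lemB, lemC]
    have h1 : B ((((-1 : ℂ) ^ p) • (((-1 : ℂ) ^ q • E q) ∘ₗ E p)) x) y
        = B x ((((-1 : ℂ) ^ q) • (((-1 : ℂ) ^ p • E p) ∘ₗ E q)) y) := by
      simp only [LinearMap.smul_apply, LinearMap.comp_apply, map_smul, smul_eq_mul]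
      rw [hadjE q, hadjE p]
      ring
    have h2 : B ((if p = 0 ∧ q = 0 then (1 : Module.End ℂ A) else 0) x) y
        = B x ((if q = 0 ∧ p = 0 then (1 : Module.End ℂ A) else 0) y) := by
      by_cases h : p = 0 ∧ q = 0
      · have h' : q = 0 ∧ p = 0 := ⟨h.2, h.1⟩
        simp [h, h']
      · have h' : ¬(q = 0 ∧ p = 0) := fun hc => h ⟨hc.2, hc.1⟩
        simp [h, h']
    simp only [LinearMap.sub_apply, map_sub]
    rw [h1, h2]
  -- the relation between adjoint discrepancies
  have rel : ∀ p q : ℕ, ∀ x y : A,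
      B ((if p = 0 then (0 : Module.End ℂ A) else W (p - 1) q) x) y
        + B ((if q = 0 then (0 : Module.End ℂ A) else W p (q - 1)) x) y
      = B x ((if q = 0 then (0 : Module.End ℂ A) else W (q - 1) p) y)
        + B x ((if p = 0 then (0 : Module.End ℂ A) else W q (p - 1)) y) := by
    intro p q x y
    have h1 := congrArg (fun f : Module.End ℂ A => B (f x) y) (hW p q)
    have h2 := congrArg (fun f : Module.End ℂ A => B x (f y)) (hW q p)
    simp only [LinearMap.add_apply, map_add] at h1 h2
    rw [h1, hN p q x y, ← h2]
  -- conclude by induction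
  intro p
  induction p with
  | zero =>
    intro q x y
    have h := rel 0 (q + 1) x y
    simpa using h
  | succ p ih =>
    intro q x y
    have h := rel (p + 1) (q + 1) x y
    simp only [Nat.succ_ne_zero, ite_false, Nat.add_sub_cancel, if_neg] at h
    have h2 := ih (q + 1) x y
    linear_combination h - h2
end

section
/- Let A be a finite-dimensional ℂ-vector space, D ∈ End(A) a diagonalizable operator with pairwise distinct eigenvalues (i.e. N = dim A distinct eigenvalues), and μ ∈ End(A). Suppose (E_k)_{k≥0} is a sequence in End(A) with E₀ = Id satisfying [D, E_{k+1}] = (μ + k·Id)∘E_k for all k ≥ 0. Then the sequence (E_k) is uniquely determined by D and μ; in particular any two such sequences coincide. -/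
/-- If D is diagonalizable with pairwise distinct eigenvalues, a sequence (E_k) with E₀ = Id
satisfying [D,E_{k+1}] = (μ + k)E_k is uniquely determined by D and μ: any two such
sequences coincide. -/
theorem stmt_12
    (A : Type) [AddCommGroup A] [Module ℂ A] [FiniteDimensional ℂ A]
    (N : ℕ) (b : Module.Basis (Fin N) ℂ A)
    (D : Module.End ℂ A) (lam : Fin N → ℂ) (hlam : Function.Injective lam)
    (hD : ∀ i, D (b i) = lam i • b i)
    (μ : Module.End ℂ A)
    (E F : ℕ → Module.End ℂ A) (hE0 : E 0 = 1) (hF0 : F 0 = 1)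
    (hE : ∀ k : ℕ, D ∘ₗ E (k + 1) - E (k + 1) ∘ₗ D = (μ + (k : ℂ) • 1) ∘ₗ E k)
    (hF : ∀ k : ℕ, D ∘ₗ F (k + 1) - F (k + 1) ∘ₗ D = (μ + (k : ℂ) • 1) ∘ₗ F k) :
    E = F := by
  -- coordinates of D x in the eigenbasis
  have hcoord : ∀ (i : Fin N) (x : A), b.repr (D x) i = lam i * b.repr x i := by
    intro i
    have h : (b.coord i) ∘ₗ D = lam i • (b.coord i) := by
      apply b.ext
      intro j
      simp only [LinearMap.comp_apply, hD, LinearMap.smul_apply, map_smul, smul_eq_mul]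
      rcases eq_or_ne j i with rfl | h
      · ring
      · have : b.coord i (b j) = 0 := by
          simp [Module.Basis.coord_apply, Module.Basis.repr_self, Finsupp.single_apply, h]
        rw [this]; ring
    intro x
    have := LinearMap.congr_fun h x
    simpa [Module.Basis.coord_apply, smul_eq_mul] using this
  -- entries of a commutator with D
  have hcomm_ent : ∀ (T : Module.End ℂ A) (i j : Fin N),
      b.repr ((D ∘ₗ T - T ∘ₗ D) (b j)) i = (lam i - lam j) * b.repr (T (b j)) i := by
    intro T i j
    have h1 : T (D (b j)) = lam j • T (b j) := by rw [hD j, map_smul]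
    simp only [LinearMap.sub_apply, LinearMap.comp_apply, map_sub, h1, map_smul,
      Finsupp.coe_sub, Finsupp.coe_smul, Pi.sub_apply, Pi.smul_apply, smul_eq_mul]
    rw [hcoord i (T (b j))]
    ring
  -- diagonal of μ vanishes (from the k = 0 equation for E)
  have hmu : ∀ i, b.repr (μ (b i)) i = 0 := by
    intro i
    have h0 := congrArg (fun T : Module.End ℂ A => b.repr (T (b i)) i) (hE 0)
    rw [hcomm_ent (E 1) i i] at h0
    simp [hE0] at h0
    exact h0.symm
  set G : ℕ → Module.End ℂ A := fun k => E k - F k with hGdef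
  have hG : ∀ k : ℕ, D ∘ₗ G (k + 1) - G (k + 1) ∘ₗ D = (μ + (k : ℂ) • 1) ∘ₗ G k := by
    intro k
    simp only [hGdef, LinearMap.comp_sub, LinearMap.sub_comp]
    have h : (D ∘ₗ E (k+1) - D ∘ₗ F (k+1)) - (E (k+1) ∘ₗ D - F (k+1) ∘ₗ D)
        = (D ∘ₗ E (k+1) - E (k+1) ∘ₗ D) - (D ∘ₗ F (k+1) - F (k+1) ∘ₗ D) := by abel
    rw [h, hE k, hF k]
  have hGzero : ∀ k, G k = 0 := by
    intro k
    induction k with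
    | zero => simp [hGdef, hE0, hF0]
    | succ k ih =>
      have hcomm0 : D ∘ₗ G (k + 1) - G (k + 1) ∘ₗ D = 0 := by
        rw [hG k, ih, LinearMap.comp_zero]
      have hoff : ∀ i j : Fin N, i ≠ j → b.repr (G (k + 1) (b j)) i = 0 := by
        intro i j hij
        have h := congrArg (fun T : Module.End ℂ A => b.repr (T (b j)) i) hcomm0
        rw [hcomm_ent (G (k+1)) i j] at h
        simp only [LinearMap.zero_apply, map_zero, Finsupp.coe_zero, Pi.zero_apply] at h
        have hne : lam i - lam j ≠ 0 := sub_ne_zero.mpr (fun hh => hij (hlam hh))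
        exact (mul_eq_zero.mp h).resolve_left hne
      have hvec : ∀ j : Fin N, G (k + 1) (b j) = (b.repr (G (k + 1) (b j)) j) • b j := by
        intro j
        apply b.repr.injective
        ext i
        rcases eq_or_ne i j with rfl | h
        · simp
        · simp only [map_smul, Finsupp.coe_smul, Pi.smul_apply, Module.Basis.repr_self,
            Finsupp.single_apply, smul_eq_mul]
          rw [if_neg (fun hh => h hh.symm), mul_zero]
          exact hoff i j h
      have hdiag : ∀ i : Fin N, b.repr (G (k + 1) (b i)) i = 0 := by
        intro i
        have h := congrArg (fun T : Module.End ℂ A => b.repr (T (b i)) i) (hG (k + 1))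
        rw [hcomm_ent (G (k+2)) i i] at h
        simp only [sub_self, zero_mul] at h
        set c := b.repr (G (k + 1) (b i)) i with hc
        have hrhs : b.repr (((μ + ((k + 1 : ℕ) : ℂ) • 1) ∘ₗ G (k + 1)) (b i)) i
            = ((k : ℂ) + 1) * c := by
          rw [LinearMap.comp_apply, hvec i, ← hc, map_smul, LinearMap.add_apply,
            LinearMap.smul_apply, Module.End.one_apply]
          simp only [map_add, map_smul, Finsupp.coe_add, Finsupp.coe_smul, Pi.add_apply,
            Pi.smul_apply, smul_eq_mul, hmu i, Module.Basis.repr_self, Finsupp.single_eq_same]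
          push_cast
          ring
        rw [hrhs] at h
        have hne : ((k : ℂ) + 1) ≠ 0 := by
          exact_mod_cast Nat.cast_add_one_ne_zero (R := ℂ) k
        have := h.symm
        exact (mul_eq_zero.mp this).resolve_left hne
      apply b.ext
      intro j
      have : b.repr (G (k + 1) (b j)) = 0 := by
        ext i
        rcases eq_or_ne i j with rfl | h
        · simpa using hdiag i
        · simpa using hoff i j h
      have := b.repr.map_eq_zero_iff.mp this
      simpa using this
  funext k
  have := hGzero k
  simpa [hGdef, sub_eq_zero] using this
end
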